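/- Let v ∈ ℂ^d and β ∈ 𝔤, and assume there is a letter 𝟘 ∈ A with ν^v_𝟘 = 0 and β_𝟘 ≠ 0. Let u ∈ ℂ^d. Then there is at most one ρ ∈ 𝔤 satisfying the two conditions: (i) ξ_v ρ − ξ_u β + [β,ρ] = 0, and (ii) ρ_{ℓ₁⋯ℓ_n} = 0 for every nonempty word ℓ₁⋯ℓ_n with ν^v_{ℓ₁} = ⋯ = ν^v_{ℓ_n} = 0; i.e., any two elements of 𝔤 satisfying (i) and (ii) coincide. -/
import Mathlib


open scoped BigOperators

/-- Convolution product on `ℂ^W`: `(δ★δ′)_w = Σ_{w=w₁w₂} δ_{w₁} δ′_{w₂}`. -/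
noncomputable def conv {A : Type*} (x y : List A → ℂ) : List A → ℂ :=
  fun w => ∑ i ∈ Finset.range (w.length + 1), x (w.take i) * y (w.drop i)

/-- Shuffle product of two words, as a multiset of words. -/
def shuffle {A : Type*} : List A → List A → Multiset (List A)
  | [], w => {w}
  | w, [] => {w}
  | a :: u, b :: v =>
      ((shuffle u (b :: v)).map (a :: ·)) + ((shuffle (a :: u) v).map (b :: ·))

/-- Membership in the group `G`: the shuffle relations with `γ_∅ = 1`. -/
def isGrp {A : Type*} (γ : List A → ℂ) : Prop :=
  γ [] = 1 ∧ ∀ w w' : List A, γ w * γ w' = ((shuffle w w').map γ).sum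

/-- Membership in the Lie algebra `𝔤`. -/
def isLie {A : Type*} (β : List A → ℂ) : Prop :=
  β [] = 0 ∧ ∀ w w' : List A, w ≠ [] → w' ≠ [] → ((shuffle w w').map β).sum = 0

/-- The unit `1` of the convolution product. -/
def unitCW {A : Type*} : List A → ℂ := fun w => match w with | [] => 1 | _ => 0

/-- `ν^v_ℓ = Σ_j v_j ν_{j,ℓ}` for a letter `ℓ`. -/
noncomputable def nuL {A : Type*} {d : ℕ} (ν : Fin d → A → ℂ) (v : Fin d → ℂ) (ℓ : A) : ℂ :=
  ∑ j, v j * ν j ℓ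

/-- `ν^v_w = ν^v_{ℓ₁} + ⋯ + ν^v_{ℓ_n}` for a word `w = ℓ₁⋯ℓ_n`. -/
noncomputable def nuW {A : Type*} {d : ℕ} (ν : Fin d → A → ℂ) (v : Fin d → ℂ) (w : List A) : ℂ :=
  (w.map (nuL ν v)).sum

/-- The operator `Ξ_v`: `(Ξ_v δ)_w = exp(ν^v_w) δ_w`. -/
noncomputable def XiOp {A : Type*} {d : ℕ} (ν : Fin d → A → ℂ) (v : Fin d → ℂ)
    (δ : List A → ℂ) : List A → ℂ :=
  fun w => Complex.exp (nuW ν v w) * δ w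

/-- The operator `ξ_v`: `(ξ_v δ)_w = ν^v_w δ_w`. -/
noncomputable def xiOp {A : Type*} {d : ℕ} (ν : Fin d → A → ℂ) (v : Fin d → ℂ)
    (δ : List A → ℂ) : List A → ℂ :=
  fun w => nuW ν v w * δ w

/-- Assume there is a letter `𝟘` with `ν^v_𝟘 = 0` and `β_𝟘 ≠ 0`. Then for
each `u ∈ ℂ^d` there is at most one `ρ ∈ 𝔤` with (i) `ξ_v ρ − ξ_u β + [β,ρ] = 0` and
(ii) `ρ_w = 0` for each nonempty word `w` all of whose letters `ℓ` satisfy `ν^v_ℓ = 0`. -/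
theorem stmt16 {A : Type*} [Countable A] {d : ℕ} (hd : 1 ≤ d) (ν : Fin d → A → ℂ)
    (v u : Fin d → ℂ) (β : List A → ℂ) (hβ : isLie β)
    (ℓ₀ : A) (hℓ₀ : nuL ν v ℓ₀ = 0) (hβ₀ : β [ℓ₀] ≠ 0)
    (ρ ρ' : List A → ℂ) (hρ : isLie ρ) (hρ' : isLie ρ')
    (hi : xiOp ν v ρ - xiOp ν u β + (conv β ρ - conv ρ β) = 0)
    (hi' : xiOp ν v ρ' - xiOp ν u β + (conv β ρ' - conv ρ' β) = 0)
    (hii : ∀ w : List A, w ≠ [] → (∀ ℓ ∈ w, nuL ν v ℓ = 0) → ρ w = 0)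
    (hii' : ∀ w : List A, w ≠ [] → (∀ ℓ ∈ w, nuL ν v ℓ = 0) → ρ' w = 0) :
    ρ = ρ' := by
  -- σ := ρ - ρ'. We show σ = 0 by strong induction on word length.
  have hconsW : ∀ (a : A) (t : List A), nuW ν v (a :: t) = nuL ν v a + nuW ν v t := by
    intro a t; simp [nuW]
  -- The linear equation satisfied by σ.
  have hE : ∀ w : List A,
      nuW ν v w * (ρ w - ρ' w)
        + (conv β (fun t => ρ t - ρ' t) w - conv (fun t => ρ t - ρ' t) β w) = 0 := by
    intro w
    have h1 := congrFun hi w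
    have h2 := congrFun hi' w
    simp only [Pi.add_apply, Pi.sub_apply, Pi.zero_apply, xiOp] at h1 h2
    have e1 : conv β (fun t => ρ t - ρ' t) w = conv β ρ w - conv β ρ' w := by
      simp only [conv]; rw [← Finset.sum_sub_distrib]
      exact Finset.sum_congr rfl (fun i _ => by ring)
    have e2 : conv (fun t => ρ t - ρ' t) β w = conv ρ β w - conv ρ' β w := by
      simp only [conv]; rw [← Finset.sum_sub_distrib]
      exact Finset.sum_congr rfl (fun i _ => by ring)
    rw [e1, e2]
    linear_combination h1 - h2
  -- decomposition of a word into a part ending with a ν-nonzero letter and an all-zero tail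
  have hdec : ∀ w : List A, ∃ y z : List A, w = y ++ z ∧ (∀ ℓ ∈ z, nuL ν v ℓ = 0) ∧
      (y = [] ∨ ∃ y' a, y = y' ++ [a] ∧ nuL ν v a ≠ 0) := by
    intro w
    induction w using List.reverseRecOn with
    | nil => exact ⟨[], [], rfl, by simp, Or.inl rfl⟩
    | append_singleton w' c ih =>
      by_cases hc : nuL ν v c = 0
      · obtain ⟨y, z, h1, h2, h3⟩ := ih
        refine ⟨y, z ++ [c], by rw [h1, List.append_assoc], ?_, h3⟩
        intro ℓ hℓ
        rcases List.mem_append.mp hℓ with h | h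
        · exact h2 ℓ h
        · simp at h; subst h; exact hc
      · exact ⟨w' ++ [c], [], by simp, by simp, Or.inr ⟨w', c, rfl, hc⟩⟩
  have hσ : ∀ n : ℕ, ∀ w : List A, w.length ≤ n → ρ w - ρ' w = 0 := by
    intro n
    induction n with
    | zero =>
      intro w hw
      have : w = [] := List.eq_nil_of_length_eq_zero (Nat.le_zero.mp hw)
      rw [this, hρ.1, hρ'.1, sub_zero]
    | succ n IH =>
      -- Step A: words of length n+1 with nonzero ν
      have hA : ∀ w : List A, w.length = n + 1 → nuW ν v w * (ρ w - ρ' w) = 0 := by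
        intro w hw
        have h := hE w
        have hL : conv β (fun t => ρ t - ρ' t) w = 0 := by
          simp only [conv]
          apply Finset.sum_eq_zero
          intro i hi
          rcases Nat.eq_zero_or_pos i with rfl | hpos
          · simp [hβ.1]
          · have hd1 : (w.drop i).length ≤ n := by
              rw [List.length_drop, hw]; omega
            show β (w.take i) * (ρ (w.drop i) - ρ' (w.drop i)) = 0
            rw [IH _ hd1, mul_zero]
        have hR : conv (fun t => ρ t - ρ' t) β w = 0 := by
          simp only [conv]
          apply Finset.sum_eq_zero
          intro i hi
          have hmem : i ≤ n + 1 := by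
            rw [hw] at hi
            have := Finset.mem_range.mp hi; omega
          rcases Nat.lt_or_ge i (n + 1) with hlt | hge
          · have ht : (w.take i).length ≤ n := by
              rw [List.length_take, hw]; omega
            show (ρ (w.take i) - ρ' (w.take i)) * β (w.drop i) = 0
            rw [IH _ ht, zero_mul]
          · have : i = n + 1 := le_antisymm hmem hge
            subst this
            have hdn : w.drop (n + 1) = [] := List.drop_eq_nil_of_le (by rw [hw])
            show (ρ (w.take (n + 1)) - ρ' (w.take (n + 1))) * β (w.drop (n + 1)) = 0
            rw [hdn, hβ.1, mul_zero]
        rw [hL, hR] at h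
        linear_combination h
      -- Step K: the key equation obtained at ℓ₀ :: w
      have hK : ∀ w : List A, w.length = n + 1 → nuW ν v w = 0 →
          β [ℓ₀] * (ρ w - ρ' w)
            = (ρ (ℓ₀ :: w.take n) - ρ' (ℓ₀ :: w.take n)) * β (w.drop n) := by
        intro w hw hnu
        have h := hE (ℓ₀ :: w)
        have hnu0 : nuW ν v (ℓ₀ :: w) = 0 := by rw [hconsW, hℓ₀, hnu, add_zero]
        have hlen : (ℓ₀ :: w).length = n + 2 := by simp [hw]
        have hL : conv β (fun t => ρ t - ρ' t) (ℓ₀ :: w) = β [ℓ₀] * (ρ w - ρ' w) := by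
          simp only [conv]
          rw [Finset.sum_eq_single_of_mem 1 (by rw [hlen]; exact Finset.mem_range.mpr (by omega))]
          · simp
          · intro i hi hne
            rcases Nat.eq_zero_or_pos i with rfl | hpos
            · simp [hβ.1]
            · have hi2 : 2 ≤ i := by omega
              have hd1 : ((ℓ₀ :: w).drop i).length ≤ n := by
                rw [List.length_drop, hlen]
                have : i ≤ n + 2 := by rw [hlen] at hi; have := Finset.mem_range.mp hi; omega
                omega
              show β ((ℓ₀ :: w).take i) * (ρ ((ℓ₀ :: w).drop i) - ρ' ((ℓ₀ :: w).drop i)) = 0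
              rw [IH _ hd1, mul_zero]
        have hR : conv (fun t => ρ t - ρ' t) β (ℓ₀ :: w)
            = (ρ (ℓ₀ :: w.take n) - ρ' (ℓ₀ :: w.take n)) * β (w.drop n) := by
          simp only [conv]
          rw [Finset.sum_eq_single_of_mem (n + 1)
              (by rw [hlen]; exact Finset.mem_range.mpr (by omega))]
          · rw [List.take_succ_cons, List.drop_succ_cons]
          · intro i hi hne
            have hib : i ≤ n + 2 := by rw [hlen] at hi; have := Finset.mem_range.mp hi; omega
            rcases Nat.lt_or_ge i (n + 1) with hlt | hge
            · have ht : ((ℓ₀ :: w).take i).length ≤ n := by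
                rw [List.length_take, hlen]; omega
              show (ρ ((ℓ₀ :: w).take i) - ρ' ((ℓ₀ :: w).take i)) * β ((ℓ₀ :: w).drop i) = 0
              rw [IH _ ht, zero_mul]
            · have : i = n + 2 := by omega
              subst this
              have hdn : (ℓ₀ :: w).drop (n + 2) = [] := List.drop_eq_nil_of_le (by rw [hlen])
              show (ρ ((ℓ₀ :: w).take (n + 2)) - ρ' ((ℓ₀ :: w).take (n + 2)))
                  * β ((ℓ₀ :: w).drop (n + 2)) = 0
              rw [hdn, hβ.1, mul_zero]
        rw [hnu0, hL, hR, zero_mul, zero_add] at h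
        linear_combination h
      -- Step B: the secondary induction on the all-zero tail
      have hz : ∀ z y : List A, (∀ ℓ ∈ z, nuL ν v ℓ = 0) →
          (y ++ z).length = n + 1 → nuW ν v (y ++ z) = 0 →
          (y = [] ∨ ∃ y' a, y = y' ++ [a] ∧ nuL ν v a ≠ 0) →
          ρ (y ++ z) - ρ' (y ++ z) = 0 := by
        intro z
        induction z using List.reverseRecOn with
        | nil =>
          intro y _ hlenyz hnu hy
          rcases hy with rfl | ⟨y', a, rfl, ha⟩
          · simp at hlenyz
          · simp only [List.append_nil] at hlenyz hnu ⊢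
            have hy'len : y'.length = n := by
              simp at hlenyz; omega
            have htk : (y' ++ [a]).take n = y' := List.take_left' hy'len
            have hdr : (y' ++ [a]).drop n = [a] := List.drop_left' hy'len
            have hk := hK (y' ++ [a]) hlenyz hnu
            rw [htk, hdr] at hk
            have hnuc : nuW ν v (ℓ₀ :: y') ≠ 0 := by
              rw [hconsW, hℓ₀, zero_add]
              have hsplit : nuW ν v (y' ++ [a]) = nuW ν v y' + nuL ν v a := by
                simp [nuW]
              rw [hsplit] at hnu
              intro h0
              rw [h0, zero_add] at hnu
              exact ha hnu
            have hAc := hA (ℓ₀ :: y') (by simp [hy'len])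
            have hz0 : ρ (ℓ₀ :: y') - ρ' (ℓ₀ :: y') = 0 :=
              (mul_eq_zero.mp hAc).resolve_left hnuc
            rw [hz0, zero_mul] at hk
            exact (mul_eq_zero.mp hk).resolve_left hβ₀
        | append_singleton z' c ihz =>
          intro y hzall hlenyz hnu hy
          by_cases hy0 : y = []
          · subst hy0
            simp only [List.nil_append] at hzall hlenyz hnu ⊢
            rw [hii _ (by simp) hzall, hii' _ (by simp) hzall, sub_zero]
          · obtain ⟨y'', a, hya, ha⟩ := hy.resolve_left hy0
            have hc0 : nuL ν v c = 0 := hzall c (by simp)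
            have hz'all : ∀ ℓ ∈ z', nuL ν v ℓ = 0 := fun ℓ hℓ => hzall ℓ (by simp [hℓ])
            have hw' : y ++ (z' ++ [c]) = (y ++ z') ++ [c] := by
              rw [List.append_assoc]
            have hyzlen : (y ++ z').length = n := by
              simp at hlenyz ⊢; omega
            have hk := hK (y ++ (z' ++ [c])) hlenyz hnu
            have htk : (y ++ (z' ++ [c])).take n = y ++ z' := by
              rw [hw']; exact List.take_left' hyzlen
            have hdr : (y ++ (z' ++ [c])).drop n = [c] := by
              rw [hw']; exact List.drop_left' hyzlen
            rw [htk, hdr] at hk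
            have hmid : ρ (ℓ₀ :: (y ++ z')) - ρ' (ℓ₀ :: (y ++ z')) = 0 := by
              have hres := ihz (ℓ₀ :: y) hz'all
                (by simp at hlenyz ⊢; omega)
                (by
                  have h1 : nuW ν v ((ℓ₀ :: y) ++ z') = nuW ν v (ℓ₀ :: (y ++ z')) := rfl
                  rw [h1, hconsW, hℓ₀, zero_add]
                  have h2 : nuW ν v (y ++ (z' ++ [c]))
                      = nuW ν v (y ++ z') + nuL ν v c := by
                    rw [hw']; simp [nuW]; ring
                  rw [h2, hc0, add_zero] at hnu
                  exact hnu)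
                (Or.inr ⟨ℓ₀ :: y'', a, by rw [hya]; rfl, ha⟩)
              exact hres
            rw [hmid, zero_mul] at hk
            exact (mul_eq_zero.mp hk).resolve_left hβ₀
      -- conclude for length ≤ n+1
      intro w hw
      rcases Nat.lt_or_ge w.length (n + 1) with hlt | hge
      · exact IH w (by omega)
      · have hwl : w.length = n + 1 := by omega
        by_cases hnu : nuW ν v w = 0
        · obtain ⟨y, z, rfl, hzall, hy⟩ := hdec w
          exact hz z y hzall hwl hnu hy
        · exact (mul_eq_zero.mp (hA w hwl)).resolve_left hnu
  funext w
  exact sub_eq_zero.mp (hσ w.length w le_rfl)
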